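/- Lemma (trajectory bounds for Perturbed GDA on the hard OS instance). Let ℓ, D_Y, r_y > 0, consider the hard OS instance, and run Perturbed GDA on f̃(x,y) = f(x,y) − (r_y/2)y² with step sizes α, c > 0 satisfying ℓc < 1, initialized at (x_0, y_0) with |x_0| ≤ 1 and y_0 ∈ [0, D_Y]. Then for every t ∈ ℕ: (i) |x_t| ≤ 1 and y_t ∈ [0, D_Y]; (ii) |x_t| ≥ (1 − ℓ·c·D_Y/(D_Y + 1))^t·|x_0|. -/
import Mathlib


noncomputable section

/-- The function `h` of the hard OS instance. -/
def hOS (l Dy : ℝ) (x : ℝ) : ℝ :=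
  if |x| ≤ 1 then l / (2 * (Dy + 1)) * x ^ 2
  else if |x| < 2 then l / (Dy + 1) - l / (2 * (Dy + 1)) * (|x| - 2) ^ 2
  else l / (Dy + 1)

/-- The derivative of `hOS` in `x`. -/
def hOS' (l Dy : ℝ) (x : ℝ) : ℝ :=
  if |x| ≤ 1 then l / (Dy + 1) * x
  else if |x| < 2 then -(l / (Dy + 1)) * (|x| - 2) * Real.sign x
  else 0

/-- Metric projection of `v` onto the interval `[0, Dy]`. -/
def projI (Dy v : ℝ) : ℝ := max 0 (min Dy v)

/-- Value function `Φ(z) = max_{y ∈ [0, Dy]} h(z)·y` of the hard OS instance. -/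
def PhiOS (l Dy : ℝ) (z : ℝ) : ℝ :=
  sSup ((fun y => hOS l Dy z * y) '' Set.Icc (0 : ℝ) Dy)

/-- `x` is an `ε`-optimization-stationary point of the hard OS instance:
the minimizer `p` of `Φ(z) + ℓ(z − x)²` over `z ∈ ℝ` satisfies `|p − x| ≤ ε/(2ℓ)`. -/
def IsOS1 (l Dy ε x : ℝ) : Prop :=
  ∃ p : ℝ, (∀ z : ℝ, PhiOS l Dy p + l * (p - x) ^ 2 ≤ PhiOS l Dy z + l * (z - x) ^ 2) ∧
    |p - x| ≤ ε / (2 * l)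

/-- Trajectory bounds for Perturbed GDA on the hard OS instance. -/
theorem perturbed_gda_hard_os_trajectory
    (l Dy ry α c : ℝ) (xs ys : ℕ → ℝ)
    (hl : 0 < l) (hDy : 0 < Dy) (hry : 0 < ry)
    (hα : 0 < α) (hc : 0 < c) (hlc : l * c < 1)
    -- initialization
    (hx0 : |xs 0| ≤ 1) (hy0 : ys 0 ∈ Set.Icc 0 Dy)
    -- Perturbed GDA on f̃(x,y) = h(x)·y − (r_y/2) y²
    (hxrec : ∀ t, xs (t + 1) = xs t - c * (hOS' l Dy (xs t) * ys t))
    (hyrec : ∀ t, ys (t + 1) = projI Dy (ys t + α * (hOS l Dy (xs (t + 1)) - ry * ys t))) :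
    ∀ t : ℕ,
      (|xs t| ≤ 1 ∧ ys t ∈ Set.Icc 0 Dy) ∧
      (1 - l * c * Dy / (Dy + 1)) ^ t * |xs 0| ≤ |xs t| := by
  have hDy1 : (0:ℝ) < Dy + 1 := by linarith
  set m : ℝ := 1 - l * c * Dy / (Dy + 1) with hm
  have hm0 : 0 < m := by
    have h1 : l * c * Dy / (Dy + 1) < Dy / (Dy + 1) := by
      apply div_lt_div_of_pos_right _ hDy1
      nlinarith
    have h2 : Dy / (Dy + 1) < 1 := by rw [div_lt_one hDy1]; linarith
    have : l * c * Dy / (Dy + 1) < 1 := lt_trans h1 h2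
    simp only [hm]; linarith
  intro t
  induction t with
  | zero => exact ⟨⟨hx0, hy0⟩, by simp⟩
  | succ t ih =>
    obtain ⟨⟨hx, hy⟩, hlow⟩ := ih
    -- x update
    have hx' : xs (t + 1) = xs t * (1 - c * (l / (Dy + 1)) * ys t) := by
      rw [hxrec t, hOS']
      simp only [hx, if_true]
      ring
    set lam : ℝ := 1 - c * (l / (Dy + 1)) * ys t with hlam
    have hyl : 0 ≤ ys t := hy.1
    have hyu : ys t ≤ Dy := hy.2
    have hlam_ge : m ≤ lam := by
      have : c * (l / (Dy + 1)) * ys t ≤ l * c * Dy / (Dy + 1) := by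
        rw [show c * (l / (Dy + 1)) * ys t = c * l * ys t / (Dy + 1) by ring,
          show l * c * Dy / (Dy + 1) = l * c * Dy / (Dy + 1) from rfl]
        exact (div_le_div_iff_of_pos_right hDy1).mpr (by nlinarith [mul_le_mul_of_nonneg_left hyu (mul_pos hc hl).le])
      simp only [hm, hlam]; linarith
    have hlam_le : lam ≤ 1 := by
      have : 0 ≤ c * (l / (Dy + 1)) * ys t := by positivity
      simp only [hlam]; linarith
    have hlam_pos : 0 < lam := lt_of_lt_of_le hm0 hlam_ge
    have habs : |xs (t + 1)| = |xs t| * lam := by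
      rw [hx', abs_mul, abs_of_pos hlam_pos]
    constructor
    · constructor
      · rw [habs]
        calc |xs t| * lam ≤ 1 * 1 :=
          mul_le_mul hx hlam_le hlam_pos.le zero_le_one
        _ = 1 := one_mul 1
      · rw [hyrec t]
        constructor
        · exact le_max_left _ _
        · apply max_le hDy.le (le_trans (min_le_left _ _) le_rfl)
    · rw [habs, pow_succ]
      calc m ^ t * m * |xs 0| = (m ^ t * |xs 0|) * m := by ring
      _ ≤ |xs t| * m := mul_le_mul_of_nonneg_right hlow hm0.le
      _ ≤ |xs t| * lam := mul_le_mul_of_nonneg_left hlam_ge (abs_nonneg _)
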